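/- arXiv:1902.10356 — 3 statements merged into one kernel-verified Lean document; each statement's English description precedes it below -/
import Mathlib

section
/- The resistance distance on a finite connected simple graph satisfies the triangle inequality: Ω_{ik} ≤ Ω_{ij} + Ω_{jk} for all vertices i, j, k, where Ω_{ij} = (Γ⁻¹)_{ii} + (Γ⁻¹)_{jj} − 2(Γ⁻¹)_{ij} and Γ = L + (1/n)J. -/
open Matrix SimpleGraph Finset

variable {V : Type*} [Fintype V] [DecidableEq V]

/-- The matrix Γ = L + (1/n)J where L is the Laplacian and J the all-ones matrix. -/
noncomputable def gammaMatrix (G : SimpleGraph V) : Matrix V V ℝ := by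
  classical
  exact G.lapMatrix ℝ + ((Fintype.card V : ℝ))⁻¹ • Matrix.of (fun _ _ => (1 : ℝ))

lemma gammaMatrix_isSymm (G : SimpleGraph V) : (gammaMatrix G).IsSymm := by
  classical
  unfold gammaMatrix
  exact (G.isSymm_lapMatrix (R := ℝ)).add (Matrix.IsSymm.smul (by ext a b; rfl) _)

lemma gammaMatrix_posDef (G : SimpleGraph V) [Nonempty V] (hG : G.Connected) :
    (gammaMatrix G).PosDef := by
  classical
  rw [posDef_iff_dotProduct_mulVec]
  constructor
  · rw [Matrix.IsHermitian, conjTranspose_eq_transpose_of_trivial]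
    exact gammaMatrix_isSymm G
  · intro x hx
    have hL : 0 ≤ x ⬝ᵥ (G.lapMatrix ℝ *ᵥ x) := by
      simpa [star_trivial] using (G.posSemidef_lapMatrix ℝ).dotProduct_mulVec_nonneg x
    have hn : (0:ℝ) < ((Fintype.card V : ℝ))⁻¹ := by positivity
    have hkey : x ⬝ᵥ (gammaMatrix G *ᵥ x) =
        x ⬝ᵥ (G.lapMatrix ℝ *ᵥ x) + ((Fintype.card V : ℝ))⁻¹ * (∑ v, x v)^2 := by
      unfold gammaMatrix
      rw [add_mulVec, dotProduct_add, smul_mulVec, dotProduct_smul]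
      congr 1
      simp [mulVec, dotProduct, sq, Finset.sum_mul, Finset.mul_sum, smul_eq_mul]
      exact Finset.sum_congr rfl fun a _ => Finset.sum_congr rfl fun b _ => by ring
    have hsq : 0 ≤ ((Fintype.card V : ℝ))⁻¹ * (∑ v, x v)^2 := by positivity
    rw [star_trivial, hkey]
    rcases lt_or_eq_of_le hL with h | h
    · linarith
    rcases lt_or_eq_of_le hsq with h2 | h2
    · linarith
    exfalso
    apply hx
    have hconst : ∀ a b : V, x a = x b := by
      intro a b
      have := (G.lapMatrix_toLinearMap₂'_apply'_eq_zero_iff_forall_reachable x).mp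
        (by rw [Matrix.toLinearMap₂'_apply', ← h])
      exact this a b (hG.preconnected a b)
    have hsum : (∑ v, x v) = 0 := by
      by_contra hs
      exact absurd h2.symm (by positivity)
    funext v
    have : (∑ u : V, x v) = 0 := by
      rw [← hsum]; exact Finset.sum_congr rfl fun u _ => hconst v u
    simpa [Finset.card_univ, Fintype.card_pos.ne'] using this

lemma min_principle (G : SimpleGraph V) [DecidableRel G.Adj] (hG : G.Connected)
    (i j : V) (w : V → ℝ)
    (hw : G.lapMatrix ℝ *ᵥ w = fun v => (if v = i then 1 else 0) - (if v = j then 1 else 0))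
    (m : V) : w j ≤ w m := by
  classical
  obtain ⟨m₀, _, hm₀⟩ := Finset.exists_min_image Finset.univ w ⟨j, Finset.mem_univ j⟩
  have hmin : ∀ v, w m₀ ≤ w v := fun v => hm₀ v (Finset.mem_univ v)
  -- step: if w v is minimal and v ≠ j, then all neighbors of v are minimal
  have step : ∀ v, w v = w m₀ → v ≠ j → ∀ u, G.Adj v u → w u = w m₀ := by
    intro v hv hvj u hadj
    have h1 : (G.lapMatrix ℝ *ᵥ w) v = (if v = i then 1 else 0) := by
      rw [hw]; simp [hvj]
    have h2 : (G.lapMatrix ℝ *ᵥ w) v = G.degree v * w v - ∑ u ∈ G.neighborFinset v, w u :=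
      G.lapMatrix_mulVec_apply v w
    have hge : (0:ℝ) ≤ (G.lapMatrix ℝ *ᵥ w) v := by rw [h1]; positivity
    have hsum_ge : (G.degree v : ℝ) * w v ≤ ∑ u ∈ G.neighborFinset v, w u := by
      calc (G.degree v : ℝ) * w v = ∑ _u ∈ G.neighborFinset v, w v := by
            rw [Finset.sum_const, G.card_neighborFinset_eq_degree, nsmul_eq_mul]
        _ ≤ ∑ u ∈ G.neighborFinset v, w u := by
            apply Finset.sum_le_sum
            intro u _
            rw [hv]; exact hmin u
    have heq : ∑ u ∈ G.neighborFinset v, (w u - w v) = 0 := by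
      have : (G.lapMatrix ℝ *ᵥ w) v = 0 := le_antisymm (by rw [h2]; linarith) hge
      rw [h2] at this
      rw [Finset.sum_sub_distrib, Finset.sum_const, G.card_neighborFinset_eq_degree,
        nsmul_eq_mul]
      linarith
    have := (Finset.sum_eq_zero_iff_of_nonneg (fun u hu => by
      rw [sub_nonneg, hv]; exact hmin u)).mp heq u (G.mem_neighborFinset v u |>.mpr hadj)
    rw [sub_eq_zero] at this
    rw [this, hv]
  -- walk induction: minimality propagates to j
  have main : ∀ v c, ∀ _p : G.Walk v c, w v = w m₀ → (w c = w m₀ ∨ w j = w m₀) := by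
    intro v c p
    induction p with
    | nil => exact fun h => Or.inl h
    | @cons a b c hab p ih =>
      intro ha
      by_cases haj : a = j
      · right; rw [← haj]; exact ha
      · exact ih (step a ha haj b hab)
  have hj : w j = w m₀ := by
    rcases main m₀ j (hG.preconnected m₀ j).some rfl with h | h <;> exact h
  rw [hj]; exact hmin m

lemma gammaMatrix_inv_symm (G : SimpleGraph V) (a b : V) :
    (gammaMatrix G)⁻¹ a b = (gammaMatrix G)⁻¹ b a := by
  have h := Matrix.transpose_nonsing_inv (gammaMatrix G)
  rw [(gammaMatrix_isSymm G)] at h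
  nth_rewrite 1 [← h]
  rw [Matrix.transpose_apply]

lemma key_ineq (G : SimpleGraph V) [Nonempty V] (hG : G.Connected) (i j k : V) :
    (gammaMatrix G)⁻¹ j i - (gammaMatrix G)⁻¹ j j ≤
      (gammaMatrix G)⁻¹ k i - (gammaMatrix G)⁻¹ k j := by
  classical
  set M := (gammaMatrix G)⁻¹ with hM
  set w : V → ℝ := fun v => M v i - M v j with hwdef
  set e : V → ℝ := fun v => (if v = i then 1 else 0) - (if v = j then 1 else 0) with he
  have hdet : IsUnit (gammaMatrix G).det := (Matrix.isUnit_iff_isUnit_det _).mp (gammaMatrix_posDef G hG).isUnit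
  have hwe : w = M *ᵥ e := by
    funext v
    simp only [hwdef, he, mulVec, dotProduct, mul_sub, mul_ite, mul_one, mul_zero,
      Finset.sum_sub_distrib, Finset.sum_ite_eq', Finset.mem_univ, if_true]
  have hΓw : gammaMatrix G *ᵥ w = e := by
    rw [hwe, Matrix.mulVec_mulVec, Matrix.mul_nonsing_inv _ hdet, Matrix.one_mulVec]
  -- column sums of the Laplacian vanish
  have hcol : ∀ u : V, ∑ v : V, G.lapMatrix ℝ v u = 0 := by
    intro u
    have h0 := congrFun (SimpleGraph.lapMatrix_mulVec_const_eq_zero (R := ℝ) (G := G)) u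
    simp only [mulVec, dotProduct, mul_one, Pi.zero_apply] at h0
    calc ∑ v : V, G.lapMatrix ℝ v u = ∑ v : V, G.lapMatrix ℝ u v :=
          Finset.sum_congr rfl fun v _ => (G.isSymm_lapMatrix (R := ℝ)).apply u v
      _ = 0 := h0
  -- sum of w is zero
  have hΓ_apply : ∀ v, (gammaMatrix G *ᵥ w) v =
      (G.lapMatrix ℝ *ᵥ w) v + ((Fintype.card V : ℝ))⁻¹ * ∑ u, w u := by
    intro v
    show ((G.lapMatrix ℝ + ((Fintype.card V : ℝ))⁻¹ • Matrix.of (fun _ _ => (1:ℝ))) *ᵥ w) v = _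
    rw [Matrix.add_mulVec, Pi.add_apply, Matrix.smul_mulVec, Pi.smul_apply, smul_eq_mul]
    congr 2
    simp [mulVec, dotProduct]
  have hsumw : ∑ u, w u = 0 := by
    have hLsum : ∑ v, (G.lapMatrix ℝ *ᵥ w) v = 0 := by
      simp only [mulVec, dotProduct]
      rw [Finset.sum_comm]
      simp only [← Finset.sum_mul]
      simp [hcol]
    have hesum : ∑ v, e v = 0 := by simp [he, Finset.sum_sub_distrib]
    have h1 : ∑ v, (gammaMatrix G *ᵥ w) v = 0 := by rw [hΓw]; exact hesum
    have h2 : ∑ v : V, ((G.lapMatrix ℝ *ᵥ w) v + ((Fintype.card V : ℝ))⁻¹ * ∑ u, w u) = 0 := by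
      rw [← Finset.sum_congr rfl fun v _ => (hΓ_apply v)]
      exact h1
    rw [Finset.sum_add_distrib, hLsum, zero_add, Finset.sum_const, Finset.card_univ,
      nsmul_eq_mul, ← mul_assoc, mul_inv_cancel₀ (by exact_mod_cast Fintype.card_pos.ne')] at h2
    linarith
  have hLw : G.lapMatrix ℝ *ᵥ w = e := by
    funext v
    have := hΓ_apply v
    rw [hΓw, hsumw, mul_zero, add_zero] at this
    exact this.symm
  exact min_principle G hG i j w hLw k

/-- The resistance distance Ω_{ij} = (Γ⁻¹)_{ii} + (Γ⁻¹)_{jj} − 2(Γ⁻¹)_{ij}. -/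
noncomputable def resDist (G : SimpleGraph V) (i j : V) : ℝ :=
  (gammaMatrix G)⁻¹ i i + (gammaMatrix G)⁻¹ j j - 2 * (gammaMatrix G)⁻¹ i j

theorem resDist_triangle (G : SimpleGraph V) [Nonempty V] (hG : G.Connected) (i j k : V) :
    resDist G i k ≤ resDist G i j + resDist G j k := by
  have h := key_ineq G hG i j k
  have s1 := gammaMatrix_inv_symm G j i
  have s2 := gammaMatrix_inv_symm G k i
  have s3 := gammaMatrix_inv_symm G k j
  unfold resDist
  linarith
end

section
/- (Foster's theorem) For a finite connected simple graph G on n vertices, the sum of the resistance distances Ω_{ij} over all edges {i,j} of G equals n − 1. -/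
open Matrix SimpleGraph Finset

variable {V : Type*} [Fintype V] [DecidableEq V]

section Aux

variable (G : SimpleGraph V) [Nonempty V] [DecidableRel G.Adj]

lemma gammaMatrix_def : gammaMatrix G =
    G.lapMatrix ℝ + ((Fintype.card V : ℝ))⁻¹ • Matrix.of (fun _ _ => (1 : ℝ)) := by
  unfold gammaMatrix
  congr!

lemma gamma_isSymm : (gammaMatrix G).IsSymm := by
  rw [Matrix.IsSymm]
  ext i j
  rw [Matrix.transpose_apply, gammaMatrix_def]
  simp only [Matrix.add_apply, Matrix.smul_apply, Matrix.of_apply, smul_eq_mul, mul_one]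
  rw [(G.isSymm_lapMatrix (R := ℝ)).apply]

lemma gamma_quadratic (x : V → ℝ) :
    x ⬝ᵥ gammaMatrix G *ᵥ x =
      Matrix.toLinearMap₂' ℝ (G.lapMatrix ℝ) x x
        + (Fintype.card V : ℝ)⁻¹ * (∑ i, x i) ^ 2 := by
  rw [Matrix.toLinearMap₂'_apply', gammaMatrix_def]
  rw [add_mulVec, dotProduct_add, smul_mulVec, dotProduct_smul]
  congr 1
  have h1 : (Matrix.of (fun _ _ => (1 : ℝ)) : Matrix V V ℝ) *ᵥ x = fun _ => ∑ j, x j := by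
    ext i
    simp [Matrix.mulVec, dotProduct]
  rw [h1]
  simp only [smul_eq_mul]
  rw [dotProduct]
  rw [← Finset.sum_mul]
  ring

lemma gamma_posDef (hG : G.Connected) : (gammaMatrix G).PosDef := by
  rw [Matrix.posDef_iff_dotProduct_mulVec]
  constructor
  · rw [Matrix.IsHermitian, Matrix.conjTranspose_eq_transpose_of_trivial]
    exact gamma_isSymm G
  · intro x hx
    rw [star_trivial, gamma_quadratic]
    have h1 : 0 ≤ Matrix.toLinearMap₂' ℝ (G.lapMatrix ℝ) x x := by
      rw [Matrix.toLinearMap₂'_apply']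
      simpa using (SimpleGraph.posSemidef_lapMatrix ℝ G).dotProduct_mulVec_nonneg x
    have h2 : (0:ℝ) ≤ (Fintype.card V : ℝ)⁻¹ * (∑ i, x i) ^ 2 := by positivity
    rcases lt_or_eq_of_le h1 with h | h
    · linarith
    rcases lt_or_eq_of_le h2 with h' | h'
    · linarith
    exfalso
    apply hx
    have hconst : ∀ i j : V, x i = x j := by
      have h0 : Matrix.toLinearMap₂' ℝ (G.lapMatrix ℝ) x x = 0 := h.symm
      rw [SimpleGraph.lapMatrix_toLinearMap₂'_apply'_eq_zero_iff_forall_reachable G x] at h0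
      exact fun i j => h0 i j (hG i j)
    have hsum : (∑ i, x i) = 0 := by
      have hn : (0:ℝ) < (Fintype.card V : ℝ)⁻¹ := by positivity
      have := h'.symm
      have hsq : (∑ i, x i) ^ 2 = 0 := by
        by_contra hne
        have : (0:ℝ) < (Fintype.card V : ℝ)⁻¹ * (∑ i, x i) ^ 2 :=
          mul_pos hn (lt_of_le_of_ne (sq_nonneg _) (Ne.symm hne))
        linarith
      exact pow_eq_zero_iff (by norm_num) |>.mp hsq
    obtain ⟨i₀⟩ := ‹Nonempty V›
    have hxconst : ∀ i, x i = x i₀ := fun i => hconst i i₀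
    have : (Fintype.card V : ℝ) * x i₀ = 0 := by
      rw [← hsum, Finset.sum_congr rfl (fun i _ => hxconst i)]
      simp [mul_comm]
    have hcard : (Fintype.card V : ℝ) ≠ 0 := by
      simp [Fintype.card_ne_zero]
    have hxi0 : x i₀ = 0 := by
      rcases mul_eq_zero.mp this with h'' | h''
      · exact absurd h'' hcard
      · exact h''
    funext i
    rw [hxconst i, hxi0]
    rfl

end Aux

/-- Foster's theorem: the sum of resistance distances over the edges of a connected graph
equals n - 1.  The sum over unordered edges is expressed as half the sum over ordered
adjacent pairs. -/
theorem foster (G : SimpleGraph V) [Nonempty V] [DecidableRel G.Adj] (hG : G.Connected) :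
    (1 / 2 : ℝ) * ∑ i : V, ∑ j : V, (if G.Adj i j then resDist G i j else 0)
      = Fintype.card V - 1 := by
  classical
  set Γ := gammaMatrix G with hΓ
  set B := Γ⁻¹ with hB
  set J : Matrix V V ℝ := Matrix.of (fun _ _ => (1 : ℝ)) with hJ
  have hPD := gamma_posDef G hG
  have hdet : IsUnit Γ.det := hPD.det_pos.ne'.isUnit
  have hΓB : Γ * B = 1 := Matrix.mul_nonsing_inv Γ hdet
  have hcard : (Fintype.card V : ℝ) ≠ 0 := by
    exact_mod_cast Nat.cast_ne_zero.mpr Fintype.card_ne_zero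
  -- symmetry of B
  have hBT : Bᵀ = B := by
    rw [hB, Matrix.transpose_nonsing_inv, (gamma_isSymm G : Γᵀ = Γ)]
  have hBsymm : ∀ i j, B i j = B j i := by
    intro i j
    conv_lhs => rw [← hBT]
    rfl
  -- J * Γ = J
  have hJΓ : J * Γ = J := by
    ext i j
    rw [Matrix.mul_apply]
    have hcol : ∀ k : V, Γ k j = G.lapMatrix ℝ k j + (Fintype.card V : ℝ)⁻¹ := by
      intro k
      rw [hΓ, gammaMatrix_def]
      simp
    simp only [hJ, Matrix.of_apply, one_mul]
    rw [Finset.sum_congr rfl (fun k _ => hcol k), Finset.sum_add_distrib]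
    have h0 : ∑ k : V, G.lapMatrix ℝ k j = 0 := by
      have hmv := congrFun (G.lapMatrix_mulVec_const_eq_zero (R := ℝ)) j
      simp only [Matrix.mulVec, dotProduct, mul_one, Pi.zero_apply] at hmv
      calc ∑ k : V, G.lapMatrix ℝ k j = ∑ k : V, G.lapMatrix ℝ j k :=
            Finset.sum_congr rfl fun k _ => ((G.isSymm_lapMatrix (R := ℝ)).apply k j).symm
        _ = 0 := hmv
    rw [h0, zero_add, Finset.sum_const, Finset.card_univ, nsmul_eq_mul,
      mul_inv_cancel₀ hcard]
  -- J * B = J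
  have hJB : J * B = J := by
    calc J * B = (J * Γ) * B := by rw [hJΓ]
      _ = J * (Γ * B) := by rw [Matrix.mul_assoc]
      _ = J := by rw [hΓB, Matrix.mul_one]
  -- L * B = 1 - n⁻¹ • J
  have hLB : G.lapMatrix ℝ * B = 1 - (Fintype.card V : ℝ)⁻¹ • J := by
    have hL : G.lapMatrix ℝ = Γ - (Fintype.card V : ℝ)⁻¹ • J := by
      rw [hΓ, gammaMatrix_def]
      ring_nf
      abel
    rw [hL, Matrix.sub_mul, hΓB, Matrix.smul_mul, hJB]
  -- trace of L * B
  have htrJ : Matrix.trace J = (Fintype.card V : ℝ) := by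
    simp [Matrix.trace, hJ]
  have htrLB : Matrix.trace (G.lapMatrix ℝ * B) = (Fintype.card V : ℝ) - 1 := by
    rw [hLB, Matrix.trace_sub, Matrix.trace_one, Matrix.trace_smul, htrJ,
      smul_eq_mul, inv_mul_cancel₀ hcard]
  -- the sum equals twice the trace
  have hS : ∀ i j : V, (if G.Adj i j then resDist G i j else 0)
      = G.adjMatrix ℝ i j * (B i i + B j j - 2 * B i j) := by
    intro i j
    by_cases h : G.Adj i j <;> simp [h, resDist, hB, hΓ]
  have hdeg : ∀ i : V, ∑ j : V, G.adjMatrix ℝ i j = (G.degree i : ℝ) := by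
    intro i
    rw [degree_eq_sum_if_adj]
    refine Finset.sum_congr rfl fun j _ => ?_
    simp [SimpleGraph.adjMatrix_apply]
  have htr_expand : Matrix.trace (G.lapMatrix ℝ * B)
      = ∑ i : V, (G.degree i : ℝ) * B i i - ∑ i : V, ∑ j : V, G.adjMatrix ℝ i j * B i j := by
    rw [Matrix.trace, ← Finset.sum_sub_distrib]
    refine Finset.sum_congr rfl fun i _ => ?_
    rw [Matrix.diag_apply, Matrix.mul_apply]
    have : ∀ j : V, G.lapMatrix ℝ i j * B j i
        = (Matrix.diagonal (fun v => (G.degree v : ℝ))) i j * B j i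
          - G.adjMatrix ℝ i j * B j i := by
      intro j
      rw [SimpleGraph.lapMatrix, Matrix.sub_apply]
      rw [SimpleGraph.degMatrix]
      ring
    rw [Finset.sum_congr rfl (fun j _ => this j), Finset.sum_sub_distrib]
    congr 1
    · rw [Finset.sum_eq_single i]
      · simp
      · intro j _ hj
        simp [Matrix.diagonal_apply, (Ne.symm hj)]
      · intro h
        exact absurd (Finset.mem_univ i) h
    · exact Finset.sum_congr rfl fun j _ => by rw [hBsymm j i]
  have key : ∑ i : V, ∑ j : V, (if G.Adj i j then resDist G i j else 0)
      = 2 * Matrix.trace (G.lapMatrix ℝ * B) := by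
    simp_rw [hS]
    have expand : ∀ i j : V, G.adjMatrix ℝ i j * (B i i + B j j - 2 * B i j)
        = (G.adjMatrix ℝ i j * B i i + G.adjMatrix ℝ i j * B j j)
          - 2 * (G.adjMatrix ℝ i j * B i j) := by intro i j; ring
    simp_rw [expand, Finset.sum_sub_distrib, Finset.sum_add_distrib]
    have hT1 : ∑ i : V, ∑ j : V, G.adjMatrix ℝ i j * B i i
        = ∑ i : V, (G.degree i : ℝ) * B i i := by
      refine Finset.sum_congr rfl fun i _ => ?_
      rw [← Finset.sum_mul, hdeg]
    have hT2 : ∑ i : V, ∑ j : V, G.adjMatrix ℝ i j * B j j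
        = ∑ i : V, (G.degree i : ℝ) * B i i := by
      rw [Finset.sum_comm]
      refine Finset.sum_congr rfl fun j _ => ?_
      rw [← Finset.sum_mul]
      congr 1
      rw [← hdeg j]
      refine Finset.sum_congr rfl fun i _ => ?_
      simp [SimpleGraph.adjMatrix_apply, G.adj_comm]
    rw [hT1, hT2, htr_expand]
    simp_rw [← Finset.mul_sum]
    ring
  rw [key, htrLB]
  ring
end

section
/- The Kirchhoff index of a finite connected simple graph G on n vertices equals n times the sum of the reciprocals of the nonzero eigenvalues of the Laplacian of G. -/
open Matrix SimpleGraph Finset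

variable {V : Type*} [Fintype V] [DecidableEq V]

theorem kirchhoff_eq_card_mul_sum_inv_eigenvalues (G : SimpleGraph V) [Nonempty V]
    [DecidableRel G.Adj] (hG : G.Connected) (hL : (G.lapMatrix ℝ).IsHermitian) :
    (1 / 2 : ℝ) * ∑ i : V, ∑ j : V, resDist G i j =
      (Fintype.card V : ℝ) *
        ∑ i ∈ Finset.univ.filter (fun i => hL.eigenvalues i ≠ 0), (hL.eigenvalues i)⁻¹ := by
  classical
  set L := G.lapMatrix ℝ with hLdef
  set Uc := (hL.eigenvectorUnitary : Matrix V V ℝ) with hUcdef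
  set μ := hL.eigenvalues with hμdef
  set u : V → V → ℝ := fun j i => hL.eigenvectorBasis j i with hudef
  have hcard : (0:ℝ) < (Fintype.card V : ℝ) := by
    exact_mod_cast Fintype.card_pos
  have hcard' : (Fintype.card V : ℝ) ≠ 0 := ne_of_gt hcard
  -- basic spectral facts
  have h_spec : L = Uc * diagonal μ * star Uc := by
    have := hL.spectral_theorem
    simpa using this
  have h_orth : ∀ j j', ∑ i, u j i * u j' i = if j = j' then (1:ℝ) else 0 := by
    intro j j'
    have h : (star Uc * Uc) j j' = (1 : Matrix V V ℝ) j j' := by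
      rw [hUcdef, Unitary.coe_star_mul_self]
    simpa [Matrix.mul_apply, Matrix.one_apply, star, conjTranspose, mul_comm, hUcdef, hudef] using h
  have hUstar : ∀ i j, (star Uc) i j = u i j := by
    intro i j
    simp [hUcdef, star, conjTranspose, hudef]
  have hUapp : ∀ i j, Uc i j = u j i := by
    intro i j; simp [hUcdef, hudef]
  -- row and column sums of L vanish
  have h_rowsum : ∀ i, ∑ k, L i k = 0 := by
    intro i
    have := congrFun (G.lapMatrix_mulVec_const_eq_zero (R := ℝ)) i
    simpa [Matrix.mulVec, dotProduct] using this
  have h_colsum : ∀ k, ∑ i, L i k = 0 := by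
    intro k
    have hsym : ∀ i, L i k = L k i := fun i =>
      congrFun (congrFun (G.isSymm_lapMatrix (R := ℝ)) k) i
    simp_rw [hsym]
    exact h_rowsum k
  have h_eig : ∀ j, L *ᵥ u j = μ j • u j := fun j => hL.mulVec_eigenvectorBasis j
  -- columns with nonzero eigenvalue sum to zero
  have h_sum0 : ∀ j, μ j ≠ 0 → ∑ i, u j i = 0 := by
    intro j hj
    have h1 : μ j * ∑ i, u j i = ∑ i, (L *ᵥ u j) i := by
      rw [h_eig j]
      simp [Finset.mul_sum]
    have h2 : ∑ i, (L *ᵥ u j) i = 0 := by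
      simp only [Matrix.mulVec, dotProduct]
      rw [Finset.sum_comm]
      simp_rw [← Finset.sum_mul]
      simp [h_colsum]
    have := h1.trans h2
    exact (mul_eq_zero.mp this).resolve_left hj
  -- columns with zero eigenvalue are constant
  have h_const : ∀ j, μ j = 0 → ∀ a b, u j a = u j b := by
    intro j hj a b
    have hz : Matrix.toLin' L (u j) = 0 := by
      rw [Matrix.toLin'_apply]
      rw [h_eig j, hj]
      simp
    have := (G.lapMatrix_mulVec_eq_zero_iff_forall_reachable (x := u j)).mp (by rwa [Matrix.toLin'_apply] at hz)
    exact this a b (hG.preconnected a b)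
  -- existence of a zero eigenvalue
  have h_ex : ∃ k, μ k = 0 := by
    by_contra h
    push_neg at h
    have hzero : star Uc *ᵥ (fun _ => (1:ℝ)) = 0 := by
      ext j
      simp only [Matrix.mulVec, dotProduct, mul_one]
      simp_rw [hUstar]
      exact h_sum0 j (h j)
    have : (fun _ => (1:ℝ)) = (0 : V → ℝ) := by
      have h1s : star Uc * Uc = 1 := by rw [hUcdef, Unitary.coe_star_mul_self]
      have h1 : Uc * star Uc = 1 := mul_eq_one_comm.mp h1s
      calc (fun _ => (1:ℝ)) = (Uc * star Uc) *ᵥ (fun _ => (1:ℝ)) := by rw [h1]; simp [Matrix.one_mulVec]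
        _ = Uc *ᵥ (star Uc *ᵥ (fun _ => (1:ℝ))) := by rw [← Matrix.mulVec_mulVec]
        _ = 0 := by rw [hzero]; simp
    have := congrFun this (Classical.arbitrary V)
    norm_num at this
  obtain ⟨k, hk⟩ := h_ex
  set c := u k (Classical.arbitrary V) with hcdef
  have hkc : ∀ i, u k i = c := fun i => h_const k hk i _
  have hc2 : (Fintype.card V : ℝ) * (c * c) = 1 := by
    have := h_orth k k
    simp only [if_pos rfl, if_true] at this
    rw [← this]
    simp [hkc, Finset.sum_const, nsmul_eq_mul]
  have hcne : c ≠ 0 := by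
    intro h
    rw [h] at hc2; norm_num at hc2
  have hcc : c * c = (Fintype.card V : ℝ)⁻¹ := by
    field_simp
    linarith [hc2]
  -- uniqueness of the zero eigenvalue index
  have h_uniq : ∀ j, μ j = 0 → j = k := by
    intro j hj
    by_contra hne
    set c' := u j (Classical.arbitrary V) with hc'def
    have hjc : ∀ i, u j i = c' := fun i => h_const j hj i _
    have h0 : ∑ i, u j i * u k i = 0 := by
      rw [h_orth j k]
      simp [hne]
    have : (Fintype.card V : ℝ) * (c' * c) = 0 := by
      rw [← h0]
      simp [hjc, hkc, Finset.sum_const, nsmul_eq_mul]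
    have hc'0 : c' = 0 := by
      rcases mul_eq_zero.mp this with h | h
      · exact absurd h hcard'
      · exact (mul_eq_zero.mp h).resolve_right hcne
    have h1 : ∑ i, u j i * u j i = 1 := by rw [h_orth j j]; simp
    rw [show (∑ i, u j i * u j i) = (Fintype.card V : ℝ) * (c' * c') by
      simp [hjc, Finset.sum_const, nsmul_eq_mul]] at h1
    rw [hc'0] at h1; norm_num at h1
  -- the candidate inverse
  set f : V → ℝ := fun j => if μ j = 0 then 1 else (μ j)⁻¹ with hfdef
  set M := Uc * diagonal f * star Uc with hMdef
  -- column sums of M are 1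
  have hMcol : ∀ b, ∑ i, M i b = 1 := by
    intro b
    have hMib : ∀ i, M i b = ∑ j, u j i * (f j * u j b) := by
      intro i
      rw [hMdef, Matrix.mul_apply]
      apply Finset.sum_congr rfl
      intro j _
      rw [Matrix.mul_diagonal, hUstar, hUapp]
      ring
    simp_rw [hMib]
    rw [Finset.sum_comm]
    have hfac : ∀ j, ∑ i, u j i * (f j * u j b) = (∑ i, u j i) * (f j * u j b) := fun j =>
      (Finset.sum_mul _ _ _).symm
    simp_rw [hfac]
    rw [Finset.sum_eq_single k]
    · have : f k = 1 := by simp [hfdef, hk]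
      rw [this, one_mul]
      simp only [hkc, Finset.sum_const, nsmul_eq_mul]
      rw [Finset.card_univ, mul_assoc]
      exact hc2
    · intro j _ hj
      have : μ j ≠ 0 := fun h => hj (h_uniq j h)
      rw [h_sum0 j this, zero_mul]
    · intro hj; exact absurd (Finset.mem_univ k) hj
  -- Γ * M = 1
  have hGM : gammaMatrix G * M = 1 := by
    have hLM : ∀ a b, (L * M) a b = (if a = b then (1:ℝ) else 0) - (Fintype.card V : ℝ)⁻¹ := by
      intro a b
      have : L * M = Uc * (diagonal μ * diagonal f) * star Uc := by
        rw [h_spec, hMdef]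
        have h1 : star Uc * Uc = 1 := by rw [hUcdef, Unitary.coe_star_mul_self]
        calc Uc * diagonal μ * star Uc * (Uc * diagonal f * star Uc)
            = Uc * diagonal μ * (star Uc * Uc) * diagonal f * star Uc := by
              noncomm_ring
          _ = Uc * (diagonal μ * diagonal f) * star Uc := by rw [h1]; noncomm_ring
      rw [this, Matrix.diagonal_mul_diagonal]
      have hμf : ∀ j, μ j * f j = 1 - (if j = k then (1:ℝ) else 0) := by
        intro j
        by_cases h : μ j = 0
        · rw [h, if_pos (h_uniq j h)]
          simp [hfdef, h]
        · have hjk : j ≠ k := fun he => h (he ▸ hk)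
          rw [if_neg hjk]
          simp [hfdef, h]
      have : diagonal (fun j => μ j * f j)
          = 1 - diagonal (fun j => if j = k then (1:ℝ) else 0) := by
        ext a' b'
        by_cases hab : a' = b'
        · subst hab
          simp only [Matrix.diagonal_apply_eq, Matrix.sub_apply, Matrix.one_apply_eq]
          exact hμf a'
        · simp [Matrix.diagonal_apply_ne _ hab, Matrix.one_apply, hab]
      rw [this]
      rw [Matrix.mul_sub, Matrix.sub_mul, Matrix.mul_one]
      have h1s : star Uc * Uc = 1 := by rw [hUcdef, Unitary.coe_star_mul_self]
      have h1 : Uc * star Uc = 1 := mul_eq_one_comm.mp h1s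
      rw [h1]
      have hP : (Uc * diagonal (fun j => if j = k then (1:ℝ) else 0) * star Uc) a b
          = (Fintype.card V : ℝ)⁻¹ := by
        rw [Matrix.mul_apply]
        simp_rw [Matrix.mul_diagonal]
        rw [Finset.sum_eq_single k]
        · rw [hUstar, hUapp, hkc, hkc]
          simp [hcc]
        · intro j _ hj; simp [hj]
        · intro hx; exact absurd (Finset.mem_univ k) hx
      rw [Matrix.sub_apply, hP, Matrix.one_apply]
    have hGamma : gammaMatrix G
        = L + ((Fintype.card V : ℝ))⁻¹ • Matrix.of (fun _ _ => (1 : ℝ)) := by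
      unfold gammaMatrix
      congr!
    ext a b
    rw [hGamma]
    rw [Matrix.add_mul, Matrix.smul_mul]
    simp only [Matrix.add_apply, Matrix.smul_apply, smul_eq_mul]
    rw [hLM a b]
    have hJ : ((Matrix.of (fun _ _ => (1:ℝ)) : Matrix V V ℝ) * M) a b = 1 := by
      simp only [Matrix.mul_apply, Matrix.of_apply, one_mul]
      exact hMcol b
    rw [hJ, mul_one]
    rw [Matrix.one_apply]
    ring
  have hInv : (gammaMatrix G)⁻¹ = M := Matrix.inv_eq_right_inv hGM
  -- trace of M
  have htr : ∑ i, M i i = ∑ j, f j := by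
    have : Matrix.trace M = Matrix.trace (diagonal f) := by
      rw [hMdef, Matrix.trace_mul_cycle]
      have h1 : star Uc * Uc = 1 := by rw [hUcdef, Unitary.coe_star_mul_self]
      rw [h1, Matrix.one_mul]
    simpa [Matrix.trace, Matrix.diag, Matrix.trace_diagonal] using this
  -- sum of f
  have hfsum : ∑ j, f j = (∑ j ∈ Finset.univ.filter (fun j => μ j ≠ 0), (μ j)⁻¹) + 1 := by
    rw [← Finset.sum_filter_add_sum_filter_not Finset.univ (fun j => μ j ≠ 0) f]
    congr 1
    · apply Finset.sum_congr rfl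
      intro j hj
      rw [Finset.mem_filter] at hj
      simp [hfdef, hj.2]
    · have : Finset.univ.filter (fun j => ¬ μ j ≠ 0) = {k} := by
        ext j
        simp only [Finset.mem_filter, Finset.mem_univ, true_and, not_not, Finset.mem_singleton]
        constructor
        · exact h_uniq j
        · intro h; rw [h]; exact hk
      rw [this]
      simp [hfdef, hk]
  -- double sum of M
  have hdsum : ∑ i, ∑ j, M i j = (Fintype.card V : ℝ) := by
    rw [Finset.sum_comm (f := fun i j => M i j)]
    simp_rw [hMcol]
    simp
  -- final computation
  have hexpand : ∑ i : V, ∑ j : V, resDist G i j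
      = (Fintype.card V : ℝ) * (∑ i, M i i) + (Fintype.card V : ℝ) * (∑ j, M j j)
        - 2 * ∑ i, ∑ j, M i j := by
    have e1 : ∀ x : V, ∑ y : V, (M x x + M y y - 2 * M x y)
        = (Fintype.card V : ℝ) * M x x + (∑ y : V, M y y) - 2 * ∑ y : V, M x y := by
      intro x
      rw [Finset.sum_sub_distrib, Finset.sum_add_distrib, Finset.sum_const, Finset.card_univ,
        nsmul_eq_mul, ← Finset.mul_sum]
    simp only [resDist, hInv]
    simp_rw [e1]
    rw [Finset.sum_sub_distrib, Finset.sum_add_distrib, Finset.sum_const, Finset.card_univ,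
      nsmul_eq_mul, ← Finset.mul_sum, ← Finset.mul_sum]
  rw [hexpand, htr, hfsum, hdsum]
  ring
end
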